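/- Let V be a finite-dimensional complex vector space with dim_C V ≥ 3, equipped with a positive-definite Hermitian form H, and let su(V, H) be the special unitary Lie algebra. Then the centralizer of su(V, H) in the algebra End_R(V) of R-linear endomorphisms of V is C·Id_V, the complex scalar operators. -/

import Mathlib

open scoped ComplexConjugate

/-- Let `V` be a complex vector space of dimension at least 3 with a positive definite
Hermitian form (an inner product). Then any `ℝ`-linear endomorphism of `V` commuting
with every element of the special unitary Lie algebra `su(V,H)` is a complex scalar. -/
theorem stmt19 (V : Type*) [NormedAddCommGroup V] [InnerProductSpace ℂ V]
    [FiniteDimensional ℂ V] (h3 : 3 ≤ Module.finrank ℂ V)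
    (u : V →ₗ[ℝ] V)
    (hu : ∀ A : V →ₗ[ℂ] V,
      (∀ x y : V, (inner ℂ (A x) y : ℂ) + (inner ℂ x (A y) : ℂ) = 0) →
      LinearMap.trace ℂ V A = 0 → ∀ x, u (A x) = A (u x)) :
    ∃ c : ℂ, ∀ x, u x = c • x := by
  classical
  set n := Module.finrank ℂ V with hn
  set b := stdOrthonormalBasis ℂ V with hbdef
  have hb : ∀ i j, (inner ℂ (b i) (b j) : ℂ) = if i = j then 1 else 0 :=
    orthonormal_iff_ite.mp b.orthonormal
  set E : Fin n → Fin n → (V →ₗ[ℂ] V) :=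
    fun j k => (innerₛₗ ℂ (b k)).smulRight (b j) with hE
  have hEapp : ∀ j k x, E j k x = (inner ℂ (b k) x : ℂ) • b j := fun j k x => rfl
  have htr : ∀ A : V →ₗ[ℂ] V,
      LinearMap.trace ℂ V A = ∑ i, (inner ℂ (b i) (A (b i)) : ℂ) := by
    intro A
    rw [LinearMap.trace_eq_matrix_trace ℂ b.toBasis, Matrix.trace]
    simp [Matrix.diag, LinearMap.toMatrix_apply, OrthonormalBasis.coe_toBasis,
      OrthonormalBasis.coe_toBasis_repr_apply, OrthonormalBasis.repr_apply_apply]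
  -- existence of a third index
  have hthird : ∀ m j : Fin n, ∃ k : Fin n, k ≠ m ∧ k ≠ j := by
    intro m j
    have h1 : (({m, j} : Finset (Fin n))ᶜ).Nonempty := by
      rw [← Finset.card_pos, Finset.card_compl]
      have h2 : ({m, j} : Finset (Fin n)).card ≤ 2 :=
        (Finset.card_insert_le _ _).trans (by simp)
      have h3' : Fintype.card (Fin n) = n := Fintype.card_fin n
      omega
    obtain ⟨k, hk⟩ := h1
    simp only [Finset.mem_compl, Finset.mem_insert, Finset.mem_singleton, not_or] at hk
    exact ⟨k, hk.1, hk.2⟩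
  -- the B operators
  have hcommB : ∀ j k : Fin n, j ≠ k → ∀ x, u ((E j k - E k j) x) = (E j k - E k j) (u x) := by
    intro j k hjk
    apply hu
    · intro x y
      simp only [LinearMap.sub_apply, hEapp, inner_sub_left, inner_sub_right,
        inner_smul_left, inner_smul_right, inner_conj_symm]
      ring
    · rw [htr]
      simp only [LinearMap.sub_apply, hEapp, inner_sub_right, inner_smul_right, hb]
      simp [Finset.sum_ite_eq, hjk, Ne.symm hjk]
  -- key pointwise identity
  have hstar : ∀ j k : Fin n, j ≠ k →
      u (b j) = (inner ℂ (b k) (u (b k)) : ℂ) • b j - (inner ℂ (b j) (u (b k)) : ℂ) • b k := by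
    intro j k hjk
    have h0 : (E j k - E k j) (b k) = b j := by
      simp [LinearMap.sub_apply, hEapp, hb, hjk, Ne.symm hjk]
    have := hcommB j k hjk (b k)
    rw [h0] at this
    rw [this]
    simp [LinearMap.sub_apply, hEapp]
  -- off-diagonal entries vanish
  have hoff : ∀ m j : Fin n, m ≠ j → (inner ℂ (b m) (u (b j)) : ℂ) = 0 := by
    intro m j hmj
    obtain ⟨k, hkm, hkj⟩ := hthird m j
    rw [hstar j k (Ne.symm hkj)]
    simp [inner_sub_right, inner_smul_right, hb, hmj, hkm.symm, Ne.symm hkm]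
  -- diagonal entries equal
  have hdiag : ∀ j k : Fin n, j ≠ k →
      (inner ℂ (b j) (u (b j)) : ℂ) = (inner ℂ (b k) (u (b k)) : ℂ) := by
    intro j k hjk
    have := congrArg (fun v => (inner ℂ (b j) v : ℂ)) (hstar j k hjk)
    simpa [inner_sub_right, inner_smul_right, hb, hjk, Ne.symm hjk] using this
  have hn3 : 0 < n := by omega
  set j0 : Fin n := ⟨0, hn3⟩ with hj0
  set c : ℂ := inner ℂ (b j0) (u (b j0)) with hc
  have hdiagc : ∀ j : Fin n, (inner ℂ (b j) (u (b j)) : ℂ) = c := by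
    intro j
    by_cases h : j = j0
    · rw [h]
    · exact hdiag j j0 h
  have hub : ∀ j, u (b j) = c • b j := by
    intro j
    obtain ⟨k, hkj, -⟩ := hthird j j
    have h1 := hstar j k (Ne.symm hkj)
    rw [hoff j k (Ne.symm hkj), hdiagc k] at h1
    simpa using h1
  -- the C operators: multiplication-by-I compatibility
  have hubI : ∀ j, u (Complex.I • b j) = (c * Complex.I) • b j := by
    intro j
    obtain ⟨k, hkj, -⟩ := hthird j j
    have hjk : j ≠ k := Ne.symm hkj
    have hcommC : ∀ x, u ((Complex.I • (E j k + E k j)) x)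
        = (Complex.I • (E j k + E k j)) (u x) := by
      apply hu
      · intro x y
        simp only [LinearMap.smul_apply, LinearMap.add_apply, hEapp, inner_smul_left,
          inner_smul_right, inner_add_left, inner_add_right, inner_conj_symm,
          Complex.conj_I]
        ring
      · rw [htr]
        simp only [LinearMap.smul_apply, LinearMap.add_apply, hEapp, inner_smul_right,
          inner_add_right, hb]
        refine Finset.sum_eq_zero fun i _ => ?_
        by_cases h1 : i = j
        · subst h1
          simp [hjk, Ne.symm hjk]
        · by_cases h2 : i = k
          · subst h2
            simp [h1, Ne.symm h1]
          · simp [h1, h2, Ne.symm h1, Ne.symm h2]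
    have h0 : (Complex.I • (E j k + E k j)) (b k) = Complex.I • b j := by
      simp [LinearMap.smul_apply, LinearMap.add_apply, hEapp, hb, hjk, Ne.symm hjk]
    have h2 := hcommC (b k)
    rw [h0, hub k] at h2
    have h1 : (Complex.I • (E j k + E k j)) (c • b k) = (c * Complex.I) • b j := by
      rw [LinearMap.map_smul, h0, smul_smul, mul_comm]
    exact h2.trans h1
  -- combine: u (z • b j) = (c * z) • b j
  have key : ∀ (z : ℂ) (j : Fin n), u (z • b j) = (c * z) • b j := by
    intro z j
    have hz : z • b j = (z.re : ℝ) • b j + (z.im : ℝ) • (Complex.I • b j) := by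
      rw [← Complex.coe_smul, ← Complex.coe_smul, smul_smul, ← add_smul]
      congr 1
      conv_lhs => rw [← Complex.re_add_im z]
    rw [hz, map_add, map_smul, map_smul, hub j, hubI j,
      ← Complex.coe_smul, ← Complex.coe_smul, smul_smul, smul_smul, ← add_smul]
    congr 1
    conv_rhs => rw [← Complex.re_add_im z]
    ring
  refine ⟨c, fun x => ?_⟩
  conv_lhs => rw [← b.sum_repr x]
  rw [map_sum]
  have : ∀ i ∈ Finset.univ, u (b.repr x i • b i) = c • (b.repr x i • b i) := by
    intro i _
    rw [key, mul_smul]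
  rw [Finset.sum_congr rfl this, ← Finset.smul_sum, b.sum_repr x]
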